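/- Let P be an exponentially localized orthogonal projection on L²(ℝ²), and let {w_{γ,a}}_{γ∈𝔇, 1≤a≤m(γ)} be a generalized Wannier basis for P, G-localized around an r-uniformly discrete set 𝔇 ⊂ ℝ², with localization function G(‖x‖) = ⟨x⟩^{2s} for some s > 3/2. Then for each i ∈ {1,2} and each x, y ∈ ℝ² the series Γ_i(x,y) = ∑_{γ∈𝔇} ∑_{1≤a≤m(γ)} γ_i w_{γ,a}(x) conj(w_{γ,a}(y)) converges absolutely, and for every 0 < ε < s − 3/2 there exist constants C₀, C₀' > 0 such that |Γ_i(x,y)| ≤ C₀ ⟨x−y⟩^{−(s−3/2−ε)} + C₀' |x_i| ⟨x−y⟩^{−(s−1−ε)} for all x, y ∈ ℝ². -/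

import Mathlib

open MeasureTheory Filter Topology

noncomputable section

abbrev R2 : Type := EuclideanSpace ℝ (Fin 2)

abbrev H2 : Type := MeasureTheory.Lp ℂ 2 (volume : Measure R2)

/-- `T` is an integral operator with kernel `k`. -/
def HasKernel (T : H2 →L[ℂ] H2) (k : R2 → R2 → ℂ) : Prop :=
  ∀ f : H2, ∀ᵐ x : R2 ∂volume, (T f : R2 → ℂ) x = ∫ y : R2, k x y * (f : R2 → ℂ) y

/-- `P` is an orthogonal projection. -/
def IsOrthProj (P : H2 →L[ℂ] H2) : Prop := IsSelfAdjoint P ∧ P ∘L P = P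

/-- `p` is a jointly continuous, exponentially localized kernel with constants `C`, `β`. -/
def IsExpLocKernel (p : R2 → R2 → ℂ) (C β : ℝ) : Prop :=
  Continuous (fun q : R2 × R2 => p q.1 q.2) ∧ 0 < C ∧ 0 < β ∧
    ∀ x y : R2, ‖p x y‖ ≤ C * Real.exp (-β * ‖x - y‖)

/-- Hilbert-Schmidt operators on `L²(ℝ²)`. -/
def IsHilbertSchmidt (T : H2 →L[ℂ] H2) : Prop :=
  ∃ (w : Set H2) (b : HilbertBasis w ℂ H2), Summable fun i => ‖T (b i)‖ ^ 2

/-- Trace class operators, characterized as products of two Hilbert-Schmidt operators. -/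
def IsTraceClass (T : H2 →L[ℂ] H2) : Prop :=
  ∃ A B : H2 →L[ℂ] H2, IsHilbertSchmidt A ∧ IsHilbertSchmidt B ∧ T = A ∘L B

def traceBasisIdx : Set H2 := (exists_hilbertBasis ℂ H2).choose

def traceBasis : HilbertBasis traceBasisIdx ℂ H2 := (exists_hilbertBasis ℂ H2).choose_spec.choose

/-- The trace of an operator, computed in a fixed Hilbert basis of `L²(ℝ²)`.
For trace class operators this is the canonical trace for any choice of basis. -/
def opTrace (T : H2 →L[ℂ] H2) : ℂ :=
  ∑' i : traceBasisIdx, (inner ℂ (traceBasis i) (T (traceBasis i)) : ℂ)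

/-- The square `Λ_L = [-L, L]²` in `ℝ²`. -/
def Lam (L : ℝ) : Set R2 := {x : R2 | |x 0| ≤ L ∧ |x 1| ≤ L}

/-- The characteristic function of `Λ_L`, with values in `ℂ`. -/
def indL (L : ℝ) (x : R2) : ℂ := (Lam L).indicator (fun _ => (1 : ℂ)) x

/-- Formal composition of two integral kernels. -/
def kComp (k₁ k₂ : R2 → R2 → ℂ) : R2 → R2 → ℂ := fun x y => ∫ z : R2, k₁ x z * k₂ z y

/-- The kernel of the commutator `[X_i, P]`, when `P` has kernel `p`. -/
def commK (p : R2 → R2 → ℂ) (i : Fin 2) : R2 → R2 → ℂ :=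
  fun x y => ((x i - y i : ℝ) : ℂ) * p x y

/-- The kernel of the double commutator `[[X₁,P],[X₂,P]]`, when `P` has kernel `p`. -/
def dcommK (p : R2 → R2 → ℂ) : R2 → R2 → ℂ :=
  fun x y => kComp (commK p 0) (commK p 1) x y - kComp (commK p 1) (commK p 0) x y

/-- The kernel of `i χ_{Λ_L} P [[X₁,P],[X₂,P]] P χ_{Λ_L}`, when `P` has kernel `p`. -/
def chernK (p : R2 → R2 → ℂ) (L : ℝ) : R2 → R2 → ℂ :=
  fun x y => indL L x * (Complex.I * kComp p (kComp (dcommK p) p) x y) * indL L y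

/-- A set `𝔇 ⊆ ℝ²` is `r`-uniformly discrete. -/
def UnifDiscrete (𝔇 : Set R2) (r : ℝ) : Prop :=
  0 < r ∧ ∀ x : R2, (𝔇 ∩ Metric.ball x r).Subsingleton

/-- The index set of a generalized Wannier basis. -/
abbrev WIdx (𝔇 : Set R2) (m : R2 → ℕ) : Type := Σ γ : 𝔇, Fin (m (γ : R2))

/-- `w` is a generalized Wannier basis for `P`, `G`-localized around `𝔇`
with localization constant `M` and uniform multiplicity bound `mStar`. -/
def IsGWB (P : H2 →L[ℂ] H2) (𝔇 : Set R2) (m : R2 → ℕ) (mStar : ℕ)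
    (w : (γ : R2) → Fin (m γ) → H2) (G : ℝ → ℝ) (M : ℝ) : Prop :=
  (∀ γ ∈ 𝔇, m γ ≤ mStar) ∧
  Orthonormal ℂ (fun σ : WIdx 𝔇 m => w (σ.1 : R2) σ.2) ∧
  (∀ γ ∈ 𝔇, ∀ a, P (w γ a) = w γ a) ∧
  (∀ f : H2, P f = f → (∀ (γ : R2), γ ∈ 𝔇 → ∀ a, (inner ℂ (w γ a) f : ℂ) = 0) → f = 0) ∧
  (∀ γ ∈ 𝔇, ∀ a, ∫⁻ x : R2,
      (‖(w γ a : R2 → ℂ) x‖₊ : ENNReal) ^ 2 * ENNReal.ofReal (G ‖x - γ‖)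
      ≤ ENNReal.ofReal M)

/-- The Japanese bracket `⟨x⟩ = (1+‖x‖²)^{1/2}` on `ℝ²`. -/
def jap (x : R2) : ℝ := Real.sqrt (1 + ‖x‖ ^ 2)

/-- The Japanese bracket `⟨t⟩ = (1+t²)^{1/2}` on `ℝ`. -/
def japR (t : ℝ) : ℝ := Real.sqrt (1 + t ^ 2)



/-! ### Auxiliary lemmas -/

lemma jap_sq (x : R2) : jap x ^ 2 = 1 + ‖x‖ ^ 2 := by
  rw [jap, Real.sq_sqrt]; positivity

lemma one_le_jap (x : R2) : 1 ≤ jap x := by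
  rw [jap]
  have := Real.sqrt_le_sqrt (show (1:ℝ) ≤ 1 + ‖x‖ ^ 2 by nlinarith [sq_nonneg ‖x‖])
  simpa using this

lemma jap_pos (x : R2) : 0 < jap x := lt_of_lt_of_le one_pos (one_le_jap x)

lemma norm_le_jap (x : R2) : ‖x‖ ≤ jap x := by
  rw [jap]
  have := Real.sqrt_le_sqrt (show ‖x‖ ^ 2 ≤ 1 + ‖x‖ ^ 2 by linarith)
  rwa [Real.sqrt_sq (norm_nonneg x)] at this

lemma inv_le_mul_inv_aux {A B C : ℝ} (hA : 0 < A) (hC : 0 < C) (h : A ≤ B * C) :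
    C⁻¹ ≤ B * A⁻¹ := by
  rw [← div_eq_mul_inv, le_div_iff₀ hA, inv_mul_le_iff₀ hC]
  exact h.trans_eq (mul_comm B C)

lemma jap_peetre (x y γ : R2) : jap (x - y) ≤ Real.sqrt 2 * (jap (x - γ) * jap (y - γ)) := by
  have h1 := jap_pos (x - γ)
  have h2 := jap_pos (y - γ)
  have key : jap (x - y) ^ 2 ≤ 2 * (jap (x - γ) ^ 2 * jap (y - γ) ^ 2) := by
    rw [jap_sq, jap_sq, jap_sq]
    have hxy : ‖x - y‖ ≤ ‖x - γ‖ + ‖y - γ‖ := by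
      rw [show x - y = (x - γ) - (y - γ) by abel]; exact norm_sub_le _ _
    nlinarith [norm_nonneg (x - y), norm_nonneg (x - γ), norm_nonneg (y - γ),
      sq_nonneg (‖x - γ‖ * ‖y - γ‖ - 1), sq_nonneg (‖x - γ‖ - ‖y - γ‖)]
  rw [show jap (x - y) = Real.sqrt (jap (x - y) ^ 2) from (Real.sqrt_sq (jap_pos _).le).symm]
  calc Real.sqrt (jap (x - y) ^ 2) ≤ Real.sqrt (2 * (jap (x - γ) ^ 2 * jap (y - γ) ^ 2)) :=
        Real.sqrt_le_sqrt key
    _ = Real.sqrt 2 * (jap (x - γ) * jap (y - γ)) := by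
        rw [Real.sqrt_mul (by norm_num), Real.sqrt_mul (by positivity),
          Real.sqrt_sq h1.le, Real.sqrt_sq h2.le]

lemma jap_peetre_rpow (x y γ : R2) {c : ℝ} (hc : 0 ≤ c) :
    jap (x - γ) ^ (-c) * jap (y - γ) ^ (-c) ≤ Real.sqrt 2 ^ c * jap (x - y) ^ (-c) := by
  have h1 := jap_pos (x - γ)
  have h2 := jap_pos (y - γ)
  have h3 := jap_pos (x - y)
  have hJ : jap (x - y) ^ c ≤ Real.sqrt 2 ^ c * ((jap (x - γ) * jap (y - γ)) ^ c) := by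
    rw [← Real.mul_rpow (Real.sqrt_nonneg 2) (by positivity)]
    exact Real.rpow_le_rpow h3.le (jap_peetre x y γ) hc
  rw [Real.rpow_neg h1.le, Real.rpow_neg h2.le, Real.rpow_neg h3.le, ← mul_inv,
    ← Real.mul_rpow h1.le h2.le]
  exact inv_le_mul_inv_aux (by positivity) (by positivity) hJ

lemma rpow_combine {u v : ℝ} (hu : 1 ≤ u) (hv : 1 ≤ v) {a b : ℝ} (ha : 0 ≤ a) (hb : 0 ≤ b) :
    u ^ (-a) * v ^ (-b) ≤ u ^ (-(a + b)) + v ^ (-(a + b)) := by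
  have hu0 : (0:ℝ) < u := lt_of_lt_of_le one_pos hu
  have hv0 : (0:ℝ) < v := lt_of_lt_of_le one_pos hv
  rcases le_total u v with h | h
  · have h1 : v ^ (-b) ≤ u ^ (-b) := by
      rw [Real.rpow_neg hu0.le, Real.rpow_neg hv0.le]
      exact inv_anti₀ (by positivity) (Real.rpow_le_rpow hu0.le h hb)
    calc u ^ (-a) * v ^ (-b) ≤ u ^ (-a) * u ^ (-b) :=
          mul_le_mul_of_nonneg_left h1 (by positivity)
      _ = u ^ (-(a + b)) := by rw [← Real.rpow_add hu0]; ring_nf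
      _ ≤ _ := le_add_of_nonneg_right (by positivity)
  · have h1 : u ^ (-a) ≤ v ^ (-a) := by
      rw [Real.rpow_neg hu0.le, Real.rpow_neg hv0.le]
      exact inv_anti₀ (by positivity) (Real.rpow_le_rpow hv0.le h ha)
    calc u ^ (-a) * v ^ (-b) ≤ v ^ (-a) * v ^ (-b) :=
          mul_le_mul_of_nonneg_right h1 (by positivity)
      _ = v ^ (-(a + b)) := by rw [← Real.rpow_add hv0]; ring_nf
      _ ≤ _ := le_add_of_nonneg_left (by positivity)

lemma abs_coord_le_norm (v : R2) (i : Fin 2) : |v i| ≤ ‖v‖ := by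
  rw [EuclideanSpace.norm_eq,
    show |v i| = Real.sqrt (‖v i‖ ^ 2) by rw [Real.sqrt_sq_eq_abs, Real.norm_eq_abs, abs_abs]]
  exact Real.sqrt_le_sqrt (Finset.single_le_sum (f := fun j => ‖v j‖ ^ 2)
    (fun j _ => by positivity) (Finset.mem_univ i))

/-- Key summability lemma: sums of `⟨x - γ⟩^(-t)` over an `r`-uniformly discrete set are
uniformly bounded for `t > 2`. -/
lemma sum_jap_rpow {𝔇 : Set R2} {r : ℝ} (h𝔇 : UnifDiscrete 𝔇 r) {t : ℝ} (ht : 2 < t) :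
    ∃ S : ℝ, 0 < S ∧ ∀ x : R2,
      Summable (fun γ : 𝔇 => jap (x - (γ : R2)) ^ (-t)) ∧
      (∑' γ : 𝔇, jap (x - (γ : R2)) ^ (-t)) ≤ S := by
  obtain ⟨hr, hsep⟩ := h𝔇
  have ht0 : 0 < t := by linarith
  set r' : ℝ := r / 2 with hr'def
  have hr'0 : 0 < r' := by positivity
  have hfin : (Module.finrank ℝ R2 : ℝ) < t := by
    have : Module.finrank ℝ R2 = 2 := finrank_euclideanSpace_fin
    rw [this]; exact_mod_cast ht
  have hint : Integrable (fun z : R2 => (1 + ‖z‖) ^ (-t)) := integrable_one_add_norm hfin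
  set I : ℝ := ∫ z : R2, (1 + ‖z‖) ^ (-t) with hIdef
  have hI0 : 0 ≤ I := integral_nonneg fun z => Real.rpow_nonneg (by positivity) _
  set V : ℝ := (volume (Metric.ball (0 : R2) r')).toReal with hVdef
  have hV0 : 0 < V := by
    rw [hVdef]
    exact ENNReal.toReal_pos (Metric.measure_ball_pos volume 0 hr'0).ne' measure_ball_lt_top.ne
  set c : ℝ := (Real.sqrt 2 * (1 + r')) ^ t with hcdef
  have hsqrt2 : (1:ℝ) ≤ Real.sqrt 2 := by
    rw [show (1:ℝ) = Real.sqrt 1 from Real.sqrt_one.symm]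
    exact Real.sqrt_le_sqrt (by norm_num)
  have hc0 : 0 < c := by
    rw [hcdef]; apply Real.rpow_pos_of_pos; nlinarith
  refine ⟨c * I / V + 1, by positivity, fun x => ?_⟩
  have hgint : Integrable (fun z : R2 => (1 + ‖x - z‖) ^ (-t)) := hint.comp_sub_left x
  have hgnn : ∀ z : R2, 0 ≤ (1 + ‖x - z‖) ^ (-t) := fun z => Real.rpow_nonneg (by positivity) _
  have hball : ∀ γ : R2, ∀ z ∈ Metric.ball γ r',
      jap (x - γ) ^ (-t) ≤ c * (1 + ‖x - z‖) ^ (-t) := by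
    intro γ z hz
    have hzγ : ‖γ - z‖ < r' := by
      rw [← dist_eq_norm, dist_comm]; exact hz
    have h2 : ‖x - z‖ ≤ ‖x - γ‖ + ‖γ - z‖ := by
      rw [show x - z = (x - γ) + (γ - z) by abel]; exact norm_add_le _ _
    have h3 : 1 + ‖x - γ‖ ≤ Real.sqrt 2 * jap (x - γ) := by
      have h4 : (1 + ‖x - γ‖) ^ 2 ≤ 2 * jap (x - γ) ^ 2 := by
        rw [jap_sq]; nlinarith [sq_nonneg (1 - ‖x - γ‖), norm_nonneg (x - γ)]
      rw [show 1 + ‖x - γ‖ = Real.sqrt ((1 + ‖x - γ‖) ^ 2) from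
        (Real.sqrt_sq (by positivity)).symm]
      calc Real.sqrt ((1 + ‖x - γ‖) ^ 2) ≤ Real.sqrt (2 * jap (x - γ) ^ 2) :=
            Real.sqrt_le_sqrt h4
        _ = Real.sqrt 2 * jap (x - γ) := by
            rw [Real.sqrt_mul (by norm_num), Real.sqrt_sq (jap_pos _).le]
    have hj1 : 1 ≤ jap (x - γ) := one_le_jap _
    have h1 : 1 + ‖x - z‖ ≤ Real.sqrt 2 * (1 + r') * jap (x - γ) := by
      nlinarith [mul_nonneg (by nlinarith : (0:ℝ) ≤ Real.sqrt 2 * jap (x - γ) - 1) hr'0.le]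
    have h6 : (1 + ‖x - z‖) ^ t ≤ c * jap (x - γ) ^ t := by
      rw [hcdef, ← Real.mul_rpow (by positivity) (jap_pos _).le]
      exact Real.rpow_le_rpow (by positivity) h1 ht0.le
    rw [Real.rpow_neg (jap_pos _).le,
      Real.rpow_neg (by positivity : (0:ℝ) ≤ 1 + ‖x - z‖)]
    exact inv_le_mul_inv_aux (by positivity) (by positivity) h6
  have hkey : ∀ u : Finset 𝔇, ∑ γ ∈ u, jap (x - (γ : R2)) ^ (-t) ≤ c * I / V := by
    intro u
    have hdisj : (↑u : Set 𝔇).Pairwise (Function.onFun Disjoint fun γ : 𝔇 => Metric.ball (γ : R2) r') := by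
      intro γ1 _ γ2 _ hne
      apply Metric.ball_disjoint_ball
      by_contra hlt
      push_neg at hlt
      have hd : dist (γ1 : R2) (γ2 : R2) < r := by
        rw [hr'def] at hlt; linarith
      have h1 : (γ1 : R2) ∈ 𝔇 ∩ Metric.ball (γ1 : R2) r :=
        ⟨γ1.2, Metric.mem_ball_self hr⟩
      have h2 : (γ2 : R2) ∈ 𝔇 ∩ Metric.ball (γ1 : R2) r :=
        ⟨γ2.2, by rw [Metric.mem_ball, dist_comm]; exact hd⟩
      exact hne (Subtype.ext (hsep (γ1 : R2) h1 h2))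
    have hib : ∀ γ : 𝔇, jap (x - (γ : R2)) ^ (-t) * V ≤
        c * ∫ z in Metric.ball (γ : R2) r', (1 + ‖x - z‖) ^ (-t) := by
      intro γ
      have hconst := setIntegral_ge_of_const_le (μ := volume)
        (f := fun z : R2 => c * (1 + ‖x - z‖) ^ (-t)) (c := jap (x - (γ : R2)) ^ (-t))
        measurableSet_ball measure_ball_lt_top.ne
        (fun z hz => hball (γ : R2) z hz) ((hgint.const_mul c).integrableOn)
      rw [Measure.real, Measure.addHaar_ball_center volume (γ : R2) r', smul_eq_mul,
        mul_comm (volume (Metric.ball (0 : R2) r')).toReal] at hconst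
      calc jap (x - (γ : R2)) ^ (-t) * V ≤
            ∫ z in Metric.ball (γ : R2) r', c * (1 + ‖x - z‖) ^ (-t) := hconst
        _ = c * ∫ z in Metric.ball (γ : R2) r', (1 + ‖x - z‖) ^ (-t) := integral_const_mul c _
    have hsum_int : ∑ γ ∈ u, ∫ z in Metric.ball ((γ : 𝔇) : R2) r', (1 + ‖x - z‖) ^ (-t) ≤ I := by
      rw [← integral_biUnion_finset u (fun γ _ => measurableSet_ball) hdisj
        (fun γ _ => hgint.integrableOn)]
      calc (∫ z in ⋃ γ ∈ u, Metric.ball ((γ : 𝔇) : R2) r', (1 + ‖x - z‖) ^ (-t))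
          ≤ ∫ z : R2, (1 + ‖x - z‖) ^ (-t) :=
            setIntegral_le_integral hgint (Filter.Eventually.of_forall hgnn)
        _ = I := by rw [hIdef]; exact integral_sub_left_eq_self (fun z => (1 + ‖z‖) ^ (-t)) volume x
    have hstep : (∑ γ ∈ u, jap (x - (γ : R2)) ^ (-t)) * V ≤ c * I := by
      rw [Finset.sum_mul]
      calc ∑ γ ∈ u, jap (x - (γ : R2)) ^ (-t) * V
          ≤ ∑ γ ∈ u, c * ∫ z in Metric.ball ((γ : 𝔇) : R2) r', (1 + ‖x - z‖) ^ (-t) :=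
            Finset.sum_le_sum fun γ _ => hib γ
        _ = c * ∑ γ ∈ u, ∫ z in Metric.ball ((γ : 𝔇) : R2) r', (1 + ‖x - z‖) ^ (-t) := by
            rw [Finset.mul_sum]
        _ ≤ c * I := mul_le_mul_of_nonneg_left hsum_int hc0.le
    rw [le_div_iff₀ hV0]
    exact hstep
  have hnn : ∀ γ : 𝔇, 0 ≤ jap (x - (γ : R2)) ^ (-t) :=
    fun γ => Real.rpow_nonneg (jap_pos _).le _
  have hsummable : Summable (fun γ : 𝔇 => jap (x - (γ : R2)) ^ (-t)) :=
    summable_of_sum_le hnn hkey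
  exact ⟨hsummable, (Summable.tsum_le_of_sum_le hsummable hkey).trans (by linarith)⟩

/-- Summing a `γ`-dependent bound over the sigma index set of a GWB. -/
lemma sigma_sum_bound {𝔇 : Set R2} {m : R2 → ℕ} {mStar : ℕ}
    (hm : ∀ γ ∈ 𝔇, m γ ≤ mStar) (h : 𝔇 → ℝ) (h0 : ∀ γ, 0 ≤ h γ)
    (hsum : Summable h) {S : ℝ} (hS : ∑' γ, h γ ≤ S) :
    Summable (fun σ : WIdx 𝔇 m => h σ.1) ∧ (∑' σ : WIdx 𝔇 m, h σ.1) ≤ (mStar : ℝ) * S := by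
  have h0' : ∀ σ : WIdx 𝔇 m, 0 ≤ (fun σ : WIdx 𝔇 m => h σ.1) σ := fun σ => h0 σ.1
  have hfib : ∀ γ : 𝔇, (∑' _a : Fin (m (γ : R2)), h γ) = (m (γ : R2) : ℝ) * h γ := by
    intro γ
    rw [tsum_fintype, Finset.sum_const, Finset.card_univ, Fintype.card_fin, nsmul_eq_mul]
  have hle : ∀ γ : 𝔇, (m (γ : R2) : ℝ) * h γ ≤ (mStar : ℝ) * h γ := fun γ =>
    mul_le_mul_of_nonneg_right (by exact_mod_cast hm (γ : R2) γ.2) (h0 γ)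
  have hsum2 : Summable (fun γ : 𝔇 => (m (γ : R2) : ℝ) * h γ) :=
    Summable.of_nonneg_of_le (fun γ => mul_nonneg (Nat.cast_nonneg _) (h0 γ)) hle
      (hsum.mul_left _)
  have hfibsummable : ∀ γ : 𝔇, Summable (fun _a : Fin (m (γ : R2)) => h γ) :=
    fun γ => Summable.of_finite
  have hsummable : Summable (fun σ : WIdx 𝔇 m => h σ.1) :=
    (summable_sigma_of_nonneg h0').2
      ⟨fun γ => hfibsummable γ, hsum2.congr fun γ => (hfib γ).symm⟩
  refine ⟨hsummable, ?_⟩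
  calc (∑' σ : WIdx 𝔇 m, h σ.1) = ∑' γ : 𝔇, ∑' _a : Fin (m (γ : R2)), h γ :=
        hsummable.tsum_sigma' hfibsummable
    _ = ∑' γ : 𝔇, (m (γ : R2) : ℝ) * h γ := tsum_congr hfib
    _ ≤ ∑' γ : 𝔇, (mStar : ℝ) * h γ := Summable.tsum_le_tsum hle hsum2 (hsum.mul_left _)
    _ = (mStar : ℝ) * ∑' γ : 𝔇, h γ := tsum_mul_left
    _ ≤ (mStar : ℝ) * S := mul_le_mul_of_nonneg_left hS (Nat.cast_nonneg _)


/-- kernel estimate for the operators `Γ_i`, polynomial case. For a GWB of an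
exponentially localized projection, `G`-localized around an `r`-uniformly discrete set with
`G(‖x‖) = ⟨x⟩^{2s}`, `s > 3/2`, the series defining the kernel of `Γ_i` converges absolutely and
satisfies `|Γ_i(x,y)| ≤ C₀ ⟨x-y⟩^{-(s-3/2-ε)} + C₀' |x_i| ⟨x-y⟩^{-(s-1-ε)}` for every
`0 < ε < s - 3/2`. -/
theorem statement_8
    (P : H2 →L[ℂ] H2) (hP : IsOrthProj P)
    (p : R2 → R2 → ℂ) (C β : ℝ) (hp : IsExpLocKernel p C β) (hker : HasKernel P p)
    (𝔇 : Set R2) (r : ℝ) (h𝔇 : UnifDiscrete 𝔇 r)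
    (s : ℝ) (hs : 3 / 2 < s)
    (m : R2 → ℕ) (mStar : ℕ) (w : (γ : R2) → Fin (m γ) → H2) (M : ℝ)
    (hGWB : IsGWB P 𝔇 m mStar w (fun t => (1 + t ^ 2) ^ s) M)
    -- pointwise bound on the continuous representatives of the GWFs:
    (K : ℝ) (hK : 0 < K)
    (hptw : ∀ γ ∈ 𝔇, ∀ a, ∀ x : R2,
      ‖(w γ a : R2 → ℂ) x‖ ≤ K * jap (x - γ) ^ (-s)) :
    ∀ i : Fin 2,
    (∀ x y : R2, Summable (fun σ : WIdx 𝔇 m =>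
      ‖(((σ.1 : R2) i : ℝ) : ℂ) * (w (σ.1 : R2) σ.2 : R2 → ℂ) x *
        (starRingEnd ℂ) ((w (σ.1 : R2) σ.2 : R2 → ℂ) y)‖)) ∧
    ∀ ε : ℝ, 0 < ε → ε < s - 3 / 2 →
      ∃ C₀ C₀' : ℝ, 0 < C₀ ∧ 0 < C₀' ∧
        ∀ x y : R2,
          ‖∑' σ : WIdx 𝔇 m,
              (((σ.1 : R2) i : ℝ) : ℂ) * (w (σ.1 : R2) σ.2 : R2 → ℂ) x *
                (starRingEnd ℂ) ((w (σ.1 : R2) σ.2 : R2 → ℂ) y)‖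
            ≤ C₀ * jap (x - y) ^ (-(s - 3 / 2 - ε)) +
              C₀' * |x i| * jap (x - y) ^ (-(s - 1 - ε)) := by

  obtain ⟨hm, _horth, _hPw, _hcomp, _hloc⟩ := hGWB
  intro i
  have hK2 : (0:ℝ) < K ^ 2 := by positivity
  have master : ∀ ε : ℝ, 0 < ε → ε < s - 3 / 2 →
      ∃ C₀ C₀' : ℝ, 0 < C₀ ∧ 0 < C₀' ∧ ∀ x y : R2,
        Summable (fun σ : WIdx 𝔇 m => ‖(((σ.1 : R2) i : ℝ) : ℂ) *
          (w (σ.1 : R2) σ.2 : R2 → ℂ) x *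
          (starRingEnd ℂ) ((w (σ.1 : R2) σ.2 : R2 → ℂ) y)‖) ∧
        ‖∑' σ : WIdx 𝔇 m, (((σ.1 : R2) i : ℝ) : ℂ) *
            (w (σ.1 : R2) σ.2 : R2 → ℂ) x *
            (starRingEnd ℂ) ((w (σ.1 : R2) σ.2 : R2 → ℂ) y)‖
          ≤ C₀ * jap (x - y) ^ (-(s - 3 / 2 - ε)) +
            C₀' * |x i| * jap (x - y) ^ (-(s - 1 - ε)) := by
    intro ε hε1 hε2
    set τ : ℝ := 2 + 2 * ε with hτdef
    set c₁ : ℝ := s - 3 / 2 - ε with hc₁def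
    set c₂ : ℝ := s - 1 - ε with hc₂def
    have hc₁0 : 0 < c₁ := by rw [hc₁def]; linarith
    have hc₂0 : 0 < c₂ := by rw [hc₂def]; linarith
    obtain ⟨S, hS0, hS⟩ := sum_jap_rpow h𝔇 (t := τ) (by rw [hτdef]; linarith)
    have hsqrt2 : (0:ℝ) < Real.sqrt 2 := by positivity
    refine ⟨K ^ 2 * Real.sqrt 2 ^ c₁ * (mStar : ℝ) * 2 * S + 1,
      K ^ 2 * Real.sqrt 2 ^ c₂ * (mStar : ℝ) * 2 * S + 1,
      by positivity, by positivity, fun x y => ?_⟩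
    set J : ℝ := jap (x - y) with hJdef
    have hJ0 : 0 < J := jap_pos _
    set D : ℝ := K ^ 2 * (Real.sqrt 2 ^ c₁ * J ^ (-c₁) +
      Real.sqrt 2 ^ c₂ * |x i| * J ^ (-c₂)) with hDdef
    have hD0 : 0 ≤ D := by
      rw [hDdef]
      have := Real.rpow_nonneg hJ0.le (-c₁)
      have := Real.rpow_nonneg hJ0.le (-c₂)
      have := Real.rpow_nonneg hsqrt2.le c₁
      have := Real.rpow_nonneg hsqrt2.le c₂
      have := abs_nonneg (x i)
      positivity
    -- the pointwise bound
    have hpt : ∀ σ : WIdx 𝔇 m,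
        ‖(((σ.1 : R2) i : ℝ) : ℂ) * (w (σ.1 : R2) σ.2 : R2 → ℂ) x *
          (starRingEnd ℂ) ((w (σ.1 : R2) σ.2 : R2 → ℂ) y)‖
        ≤ D * (jap (x - (σ.1 : R2)) ^ (-τ) + jap (y - (σ.1 : R2)) ^ (-τ)) := by
      rintro ⟨γ, a⟩
      set u : ℝ := jap (x - (γ : R2)) with hudef
      set v : ℝ := jap (y - (γ : R2)) with hvdef
      have hu1 : 1 ≤ u := one_le_jap _
      have hv1 : 1 ≤ v := one_le_jap _
      have hu0 : (0:ℝ) < u := lt_of_lt_of_le one_pos hu1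
      have hv0 : (0:ℝ) < v := lt_of_lt_of_le one_pos hv1
      have hwx : ‖(w (γ : R2) a : R2 → ℂ) x‖ ≤ K * u ^ (-s) := hptw (γ : R2) γ.2 a x
      have hwy : ‖(w (γ : R2) a : R2 → ℂ) y‖ ≤ K * v ^ (-s) := hptw (γ : R2) γ.2 a y
      have habs : ‖(((γ : R2) i : ℝ) : ℂ) * (w (γ : R2) a : R2 → ℂ) x *
          (starRingEnd ℂ) ((w (γ : R2) a : R2 → ℂ) y)‖ =
          |(γ : R2) i| * (‖(w (γ : R2) a : R2 → ℂ) x‖ *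
            ‖(w (γ : R2) a : R2 → ℂ) y‖) := by
        rw [norm_mul, norm_mul, Complex.norm_conj, Complex.norm_real, Real.norm_eq_abs]; ring
      have hcoord : |(γ : R2) i| ≤ |x i| + u := by
        have h1 : |(γ : R2) i| ≤ |x i| + |x i - (γ : R2) i| := by
          have := abs_sub_abs_le_abs_sub (x i) ((γ : R2) i)
          have := abs_sub_comm (x i) ((γ : R2) i)
          have h2 : (γ : R2) i = x i - (x i - (γ : R2) i) := by ring
          calc |(γ : R2) i| = |x i - (x i - (γ : R2) i)| := by rw [← h2]
            _ ≤ |x i| + |x i - (γ : R2) i| := abs_sub _ _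
        have h3 : |x i - (γ : R2) i| = |(x - (γ : R2)) i| := by
          rw [PiLp.sub_apply]
        have h4 : |(x - (γ : R2)) i| ≤ ‖x - (γ : R2)‖ := abs_coord_le_norm _ i
        have h5 : ‖x - (γ : R2)‖ ≤ u := by rw [hudef]; exact norm_le_jap _
        linarith
      -- first product bound
      have hP1 : u ^ (-s) * v ^ (-s) ≤
          Real.sqrt 2 ^ c₂ * J ^ (-c₂) * (u ^ (-τ) + v ^ (-τ)) := by
        have eu : u ^ (-s) = u ^ (-c₂) * u ^ (-(1 + ε)) := by
          rw [← Real.rpow_add hu0]; congr 1; rw [hc₂def]; ring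
        have ev : v ^ (-s) = v ^ (-c₂) * v ^ (-(1 + ε)) := by
          rw [← Real.rpow_add hv0]; congr 1; rw [hc₂def]; ring
        have hcomb : u ^ (-(1 + ε)) * v ^ (-(1 + ε)) ≤ u ^ (-τ) + v ^ (-τ) := by
          have := rpow_combine hu1 hv1 (by linarith : (0:ℝ) ≤ 1 + ε)
            (by linarith : (0:ℝ) ≤ 1 + ε)
          rwa [show ((1:ℝ) + ε) + (1 + ε) = τ by rw [hτdef]; ring] at this
        calc u ^ (-s) * v ^ (-s)
            = (u ^ (-c₂) * v ^ (-c₂)) * (u ^ (-(1 + ε)) * v ^ (-(1 + ε))) := by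
              rw [eu, ev]; ring
          _ ≤ (Real.sqrt 2 ^ c₂ * J ^ (-c₂)) * (u ^ (-τ) + v ^ (-τ)) := by
              apply mul_le_mul (jap_peetre_rpow x y (γ : R2) hc₂0.le) hcomb
              · positivity
              · positivity
      -- second product bound
      have hP2 : u ^ ((1:ℝ)) * (u ^ (-s) * v ^ (-s)) ≤
          Real.sqrt 2 ^ c₁ * J ^ (-c₁) * (u ^ (-τ) + v ^ (-τ)) := by
        have eu : u ^ ((1:ℝ)) * u ^ (-s) = u ^ (-c₁) * u ^ (-(1 / 2 + ε)) := by
          rw [← Real.rpow_add hu0, ← Real.rpow_add hu0]; congr 1; rw [hc₁def]; ring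
        have ev : v ^ (-s) = v ^ (-c₁) * v ^ (-(3 / 2 + ε)) := by
          rw [← Real.rpow_add hv0]; congr 1; rw [hc₁def]; ring
        have hcomb : u ^ (-(1 / 2 + ε)) * v ^ (-(3 / 2 + ε)) ≤ u ^ (-τ) + v ^ (-τ) := by
          have := rpow_combine hu1 hv1 (by linarith : (0:ℝ) ≤ 1 / 2 + ε)
            (by linarith : (0:ℝ) ≤ 3 / 2 + ε)
          rwa [show ((1:ℝ) / 2 + ε) + (3 / 2 + ε) = τ by rw [hτdef]; ring] at this
        calc u ^ ((1:ℝ)) * (u ^ (-s) * v ^ (-s))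
            = (u ^ (-c₁) * v ^ (-c₁)) * (u ^ (-(1 / 2 + ε)) * v ^ (-(3 / 2 + ε))) := by
              rw [← mul_assoc, eu, ev]; ring
          _ ≤ (Real.sqrt 2 ^ c₁ * J ^ (-c₁)) * (u ^ (-τ) + v ^ (-τ)) := by
              apply mul_le_mul (jap_peetre_rpow x y (γ : R2) hc₁0.le) hcomb
              · positivity
              · positivity
      calc ‖(((γ : R2) i : ℝ) : ℂ) * (w (γ : R2) a : R2 → ℂ) x *
            (starRingEnd ℂ) ((w (γ : R2) a : R2 → ℂ) y)‖
          = |(γ : R2) i| * (‖(w (γ : R2) a : R2 → ℂ) x‖ *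
              ‖(w (γ : R2) a : R2 → ℂ) y‖) := habs
        _ ≤ (|x i| + u) * ((K * u ^ (-s)) * (K * v ^ (-s))) := by
            apply mul_le_mul hcoord
            · apply mul_le_mul hwx hwy (norm_nonneg _)
              positivity
            · exact mul_nonneg (norm_nonneg _) (norm_nonneg _)
            · have := abs_nonneg (x i); linarith
        _ = K ^ 2 * |x i| * (u ^ (-s) * v ^ (-s)) +
            K ^ 2 * (u ^ ((1:ℝ)) * (u ^ (-s) * v ^ (-s))) := by
            rw [Real.rpow_one]; ring
        _ ≤ K ^ 2 * |x i| * (Real.sqrt 2 ^ c₂ * J ^ (-c₂) * (u ^ (-τ) + v ^ (-τ))) +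
            K ^ 2 * (Real.sqrt 2 ^ c₁ * J ^ (-c₁) * (u ^ (-τ) + v ^ (-τ))) := by
            apply add_le_add
            · apply mul_le_mul_of_nonneg_left hP1
              have := abs_nonneg (x i); positivity
            · exact mul_le_mul_of_nonneg_left hP2 (by positivity)
        _ = D * (u ^ (-τ) + v ^ (-τ)) := by rw [hDdef]; ring
    -- summability of the dominating series
    have hhx := hS x
    have hhy := hS y
    have hhsum : Summable (fun γ : 𝔇 => jap (x - (γ : R2)) ^ (-τ) + jap (y - (γ : R2)) ^ (-τ)) :=
      hhx.1.add hhy.1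
    have hhtsum : (∑' γ : 𝔇, (jap (x - (γ : R2)) ^ (-τ) + jap (y - (γ : R2)) ^ (-τ))) ≤ 2 * S := by
      rw [Summable.tsum_add hhx.1 hhy.1]; linarith [hhx.2, hhy.2]
    obtain ⟨hsig, hsigsum⟩ := sigma_sum_bound hm
      (fun γ : 𝔇 => jap (x - (γ : R2)) ^ (-τ) + jap (y - (γ : R2)) ^ (-τ))
      (fun γ => add_nonneg (Real.rpow_nonneg (jap_pos _).le _) (Real.rpow_nonneg (jap_pos _).le _))
      hhsum hhtsum
    have hDsig : Summable (fun σ : WIdx 𝔇 m =>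
        D * (jap (x - (σ.1 : R2)) ^ (-τ) + jap (y - (σ.1 : R2)) ^ (-τ))) := hsig.mul_left D
    have habs_summable : Summable (fun σ : WIdx 𝔇 m =>
        ‖(((σ.1 : R2) i : ℝ) : ℂ) * (w (σ.1 : R2) σ.2 : R2 → ℂ) x *
          (starRingEnd ℂ) ((w (σ.1 : R2) σ.2 : R2 → ℂ) y)‖) :=
      Summable.of_nonneg_of_le (fun σ => norm_nonneg _) hpt hDsig
    refine ⟨habs_summable, ?_⟩
    have h1 : ‖∑' σ : WIdx 𝔇 m, (((σ.1 : R2) i : ℝ) : ℂ) *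
        (w (σ.1 : R2) σ.2 : R2 → ℂ) x * (starRingEnd ℂ) ((w (σ.1 : R2) σ.2 : R2 → ℂ) y)‖
        ≤ ∑' σ : WIdx 𝔇 m, ‖(((σ.1 : R2) i : ℝ) : ℂ) *
          (w (σ.1 : R2) σ.2 : R2 → ℂ) x * (starRingEnd ℂ) ((w (σ.1 : R2) σ.2 : R2 → ℂ) y)‖ := by
      exact norm_tsum_le_tsum_norm habs_summable
    have h2 : (∑' σ : WIdx 𝔇 m, ‖(((σ.1 : R2) i : ℝ) : ℂ) *
          (w (σ.1 : R2) σ.2 : R2 → ℂ) x * (starRingEnd ℂ) ((w (σ.1 : R2) σ.2 : R2 → ℂ) y)‖)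
        ≤ ∑' σ : WIdx 𝔇 m, D * (jap (x - (σ.1 : R2)) ^ (-τ) + jap (y - (σ.1 : R2)) ^ (-τ)) :=
      Summable.tsum_le_tsum hpt habs_summable hDsig
    have h3 : (∑' σ : WIdx 𝔇 m,
        D * (jap (x - (σ.1 : R2)) ^ (-τ) + jap (y - (σ.1 : R2)) ^ (-τ)))
        ≤ D * ((mStar : ℝ) * (2 * S)) := by
      rw [tsum_mul_left]
      exact mul_le_mul_of_nonneg_left hsigsum hD0
    have hfinal : D * ((mStar : ℝ) * (2 * S)) ≤
        (K ^ 2 * Real.sqrt 2 ^ c₁ * (mStar : ℝ) * 2 * S + 1) * J ^ (-c₁) +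
        (K ^ 2 * Real.sqrt 2 ^ c₂ * (mStar : ℝ) * 2 * S + 1) * |x i| * J ^ (-c₂) := by
      rw [hDdef]
      have hJ1 : 0 ≤ J ^ (-c₁) := Real.rpow_nonneg hJ0.le _
      have hJ2 : 0 ≤ J ^ (-c₂) := Real.rpow_nonneg hJ0.le _
      have hxi : 0 ≤ |x i| := abs_nonneg _
      nlinarith [mul_nonneg hxi hJ2]
    calc ‖∑' σ : WIdx 𝔇 m, (((σ.1 : R2) i : ℝ) : ℂ) *
          (w (σ.1 : R2) σ.2 : R2 → ℂ) x * (starRingEnd ℂ) ((w (σ.1 : R2) σ.2 : R2 → ℂ) y)‖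
        ≤ D * ((mStar : ℝ) * (2 * S)) := le_trans h1 (le_trans h2 h3)
      _ ≤ _ := hfinal
  constructor
  · intro x y
    obtain ⟨_, _, _, _, h⟩ := master ((s - 3 / 2) / 2) (by linarith) (by linarith)
    exact (h x y).1
  · intro ε hε1 hε2
    obtain ⟨C₀, C₀', h1, h2, h3⟩ := master ε hε1 hε2
    exact ⟨C₀, C₀', h1, h2, fun x y => (h3 x y).2⟩


end
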